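/- If λ = (λ_1, ..., λ_n) lies in the Gårding cone Γ_k and λ_1 ≥ λ_2 ≥ ... ≥ λ_n, then 0 < σ_{k-1}(λ|1) ≤ σ_{k-1}(λ|2) ≤ ... ≤ σ_{k-1}(λ|n). -/

import Mathlib

open Finset
open Polynomial

noncomputable def esym {n : ℕ} (k : ℕ) (lam : Fin n → ℝ) : ℝ :=
  ∑ s ∈ Finset.univ.powersetCard k, ∏ i ∈ s, lam i

noncomputable def esym1 {n : ℕ} (k : ℕ) (lam : Fin n → ℝ) (i : Fin n) : ℝ :=
  ∑ s ∈ (Finset.univ.erase i).powersetCard k, ∏ j ∈ s, lam j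

noncomputable def esym2 {n : ℕ} (k : ℕ) (lam : Fin n → ℝ) (i j : Fin n) : ℝ :=
  ∑ s ∈ ((Finset.univ.erase i).erase j).powersetCard k, ∏ l ∈ s, lam l

def GardingCone (n k : ℕ) : Set (Fin n → ℝ) :=
  {lam | ∀ j : ℕ, 1 ≤ j → j ≤ k → 0 < esym j lam}

/-- Elementary symmetric function of `lam` restricted to a finset `A`. -/
noncomputable def esymF {ι : Type} [DecidableEq ι] (lam : ι → ℝ) (j : ℕ) (A : Finset ι) : ℝ :=
  ∑ s ∈ A.powersetCard j, ∏ i ∈ s, lam i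

lemma esymF_zero {ι : Type} [DecidableEq ι] (lam : ι → ℝ) (A : Finset ι) :
    esymF lam 0 A = 1 := by
  simp [esymF]

lemma esymF_insert {ι : Type} [DecidableEq ι] (lam : ι → ℝ) (j : ℕ) {B : Finset ι} {i : ι}
    (hni : i ∉ B) :
    esymF lam (j+1) (insert i B) = esymF lam (j+1) B + lam i * esymF lam j B := by
  rw [esymF, Finset.powersetCard_succ_insert hni]
  rw [Finset.sum_union]
  · congr 1
    rw [Finset.sum_image]
    · rw [esymF, Finset.mul_sum]
      refine Finset.sum_congr rfl fun s hs => ?_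
      rw [Finset.mem_powersetCard] at hs
      have : i ∉ s := fun h => hni (hs.1 h)
      rw [Finset.prod_insert this]
    · intro s hs t ht hst
      rw [Finset.mem_coe, Finset.mem_powersetCard] at hs ht
      have hsi : i ∉ s := fun h => hni (hs.1 h)
      have hti : i ∉ t := fun h => hni (ht.1 h)
      have := congrArg (fun u => Finset.erase u i) hst
      simpa [Finset.erase_insert hsi, Finset.erase_insert hti] using this
  · rw [Finset.disjoint_left]
    intro s hs hs'
    rw [Finset.mem_powersetCard] at hs
    rw [Finset.mem_image] at hs'
    obtain ⟨t, _, rfl⟩ := hs'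
    exact hni (hs.1 (Finset.mem_insert_self i t))

lemma esymF_erase {ι : Type} [DecidableEq ι] (lam : ι → ℝ) (j : ℕ) (A : Finset ι) {i : ι}
    (hi : i ∈ A) :
    esymF lam (j+1) A = esymF lam (j+1) (A.erase i) + lam i * esymF lam j (A.erase i) := by
  conv_lhs => rw [← Finset.insert_erase hi]
  exact esymF_insert lam j (Finset.notMem_erase _ _)

lemma esymF_congr {ι : Type} [DecidableEq ι] {lam mu : ι → ℝ} (j : ℕ) {A : Finset ι}
    (h : ∀ i ∈ A, lam i = mu i) : esymF lam j A = esymF mu j A := by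
  refine Finset.sum_congr rfl fun s hs => Finset.prod_congr rfl fun i hi => ?_
  rw [Finset.mem_powersetCard] at hs
  exact h i (hs.1 hi)

lemma multiset_sum_pos {s : Multiset ℝ} (h : ∀ x ∈ s, 0 < x) (hs : s ≠ 0) : 0 < s.sum := by
  have : ∀ x ∈ s, (0:ℝ) ≤ x := fun x hx => le_of_lt (h x hx)
  obtain ⟨a, ha⟩ := Multiset.exists_mem_of_ne_zero hs
  have h1 : a + (s.erase a).sum ≤ s.sum := by
    rw [← Multiset.sum_cons, Multiset.cons_erase ha]
  have h2 : 0 ≤ (s.erase a).sum :=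
    Multiset.sum_nonneg fun x hx => this x (Multiset.mem_of_mem_erase hx)
  have := h a ha
  linarith

/-- Closure lemma: if all `σ_j ≥ 0` for `1 ≤ j ≤ k` and `σ_k > 0`, then all are positive. -/
lemma lemR {ι : Type} [DecidableEq ι] (lam : ι → ℝ) (A : Finset ι) (k : ℕ)
    (hkA : k ≤ A.card)
    (h : ∀ j, 1 ≤ j → j ≤ k → 0 ≤ esymF lam j A) (hk : 0 < esymF lam k A) :
    ∀ j, j ≤ k → 0 < esymF lam j A := by
  classical
  set n := A.card with hn
  set m := n - k with hm
  set f : ℝ[X] := ∏ i ∈ A, (X + C (lam i)) with hf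
  -- basic facts about f
  have hfs : f = ((A.val.map fun i => -lam i).map fun a => X - C a).prod := by
    rw [hf, Finset.prod, Multiset.map_map]
    congr 1
    refine Multiset.map_congr rfl fun i _ => ?_
    simp [sub_neg_eq_add]
  have hfmonic : f.Monic := monic_prod_of_monic _ _ fun i _ => monic_X_add_C _
  have hfdeg : f.natDegree = n := by
    rw [hf, natDegree_prod_of_monic _ _ fun i _ => monic_X_add_C _]
    simp [hn]
  have hfroots : Multiset.card f.roots = n := by
    rw [hfs, roots_multiset_prod_X_sub_C]
    simp [hn]
  have hfcoeff : ∀ j, j ≤ n → f.coeff (n - j) = esymF lam j A := by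
    intro j hj
    rw [hf, Finset.prod_X_add_C_coeff _ _ (Nat.sub_le n j)]
    have hje : #A - (n - j) = j := by omega
    rw [hje, esymF]
  set g : ℝ[X] := (⇑derivative)^[m] f with hg
  have hgcoeff : ∀ d, g.coeff d = ((d + m).descFactorial m : ℝ) * f.coeff (d + m) := by
    intro d
    rw [hg, Polynomial.coeff_iterate_derivative, nsmul_eq_mul]
  have hS0 : esymF lam 0 A = 1 := esymF_zero lam A
  have hSnonneg : ∀ j, j ≤ k → 0 ≤ esymF lam j A := by
    intro j hj
    rcases Nat.eq_zero_or_pos j with rfl | hj1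
    · rw [hS0]; norm_num
    · exact h j hj1 hj
  have hcoefftr : ∀ j, j ≤ k → g.coeff (k - j) = ((n - j).descFactorial m : ℝ) * esymF lam j A := by
    intro j hj
    have e1 : k - j + m = n - j := by omega
    rw [hgcoeff, e1, hfcoeff j (le_trans hj hkA)]
  have hgknn : ∀ d, d ≤ k → 0 ≤ g.coeff d := by
    intro d hd
    have hde : d = k - (k - d) := by omega
    rw [hde, hcoefftr (k - d) (by omega)]
    exact mul_nonneg (by positivity) (hSnonneg _ (by omega))
  have hdF : ∀ j, j ≤ k → (0:ℝ) < ((n - j).descFactorial m : ℝ) := by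
    intro j hj
    have hnz : (n - j).descFactorial m ≠ 0 := by
      rw [Ne, Nat.descFactorial_eq_zero_iff_lt]
      omega
    have : 0 < (n - j).descFactorial m := Nat.pos_of_ne_zero hnz
    exact_mod_cast this
  have hgk : 0 < g.coeff k := by
    have h0 := hcoefftr 0 (Nat.zero_le k)
    rw [Nat.sub_zero] at h0
    rw [h0, hS0, mul_one]
    exact hdF 0 (Nat.zero_le k)
  have hg0 : 0 < g.coeff 0 := by
    have h0 := hcoefftr k le_rfl
    rw [Nat.sub_self] at h0
    rw [h0]
    exact mul_pos (hdF k le_rfl) hk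
  have hgne : g ≠ 0 := by
    intro h0
    rw [h0, Polynomial.coeff_zero] at hgk
    exact lt_irrefl 0 hgk
  have hgdeg : g.natDegree = k := by
    refine le_antisymm (natDegree_le_iff_coeff_eq_zero.mpr ?_)
      (le_natDegree_of_ne_zero (ne_of_gt hgk))
    intro N hN
    rw [hgcoeff]
    have hz : f.coeff (N + m) = 0 := coeff_eq_zero_of_natDegree_lt (by omega)
    rw [hz, mul_zero]
  have hrootcard : ∀ t, n - t ≤ Multiset.card ((⇑derivative)^[t] f).roots := by
    intro t
    induction t with
    | zero => simp [hfroots]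
    | succ t iht =>
      have hd := Polynomial.card_roots_le_derivative ((⇑derivative)^[t] f)
      rw [Function.iterate_succ_apply']
      omega
  have hgroots : Multiset.card g.roots = k := by
    have h1 := hrootcard m
    have h2 := Polynomial.card_roots' g
    rw [hgdeg] at h2
    rw [← hg] at h1
    omega
  have hrootneg : ∀ r ∈ g.roots, r < 0 := by
    intro r hr
    by_contra hrn
    push_neg at hrn
    have hev : g.eval r = 0 := Polynomial.isRoot_of_mem_roots hr
    have hpos : 0 < g.eval r := by
      rw [Polynomial.eval_eq_sum_range, hgdeg]
      refine Finset.sum_pos' (fun d hd => ?_) ⟨0, by simp, by simpa using hg0⟩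
      exact mul_nonneg (hgknn d (Nat.lt_succ_iff.mp (Finset.mem_range.mp hd)))
        (pow_nonneg hrn d)
    linarith
  have hfact := Polynomial.C_leadingCoeff_mul_prod_multiset_X_sub_C (p := g)
    (by rw [hgroots, hgdeg])
  have hlc : g.leadingCoeff = g.coeff k := by
    rw [Polynomial.leadingCoeff, hgdeg]
  set P : ℝ[X] := (g.roots.map fun a => X - C a).prod with hP
  have hPcoeff : ∀ d, d ≤ k → 0 < P.coeff d := by
    intro d hd
    have hPs : P = ((g.roots.map Neg.neg).map fun a => X + C a).prod := by
      rw [hP, Multiset.map_map]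
      congr 1
      refine Multiset.map_congr rfl fun r _ => ?_
      simp [sub_eq_add_neg]
    have hcard : Multiset.card (g.roots.map Neg.neg) = k := by
      rw [Multiset.card_map, hgroots]
    rw [hPs, Multiset.prod_X_add_C_coeff _ (by rw [hcard]; exact hd), hcard,
      Multiset.esymm]
    apply multiset_sum_pos
    · intro x hx
      rw [Multiset.mem_map] at hx
      obtain ⟨t, ht, rfl⟩ := hx
      rw [Multiset.mem_powersetCard] at ht
      apply Multiset.prod_pos
      intro a hat
      have hmem : a ∈ g.roots.map Neg.neg := Multiset.mem_of_le ht.1 hat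
      rw [Multiset.mem_map] at hmem
      obtain ⟨r, hr, rfl⟩ := hmem
      simpa using hrootneg r hr
    · intro h0
      rw [Multiset.map_eq_zero] at h0
      have hc := Multiset.card_powersetCard (k - d) (g.roots.map Neg.neg)
      rw [h0, hcard] at hc
      simp only [Multiset.card_zero] at hc
      have := Nat.choose_pos (n := k) (k := k - d) (by omega)
      omega
  have hgcoeffpos : ∀ d, d ≤ k → 0 < g.coeff d := by
    intro d hd
    have hcg := congrArg (fun p => Polynomial.coeff p d) hfact
    simp only [Polynomial.coeff_C_mul] at hcg
    rw [← hcg, hlc]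
    exact mul_pos hgk (hPcoeff d hd)
  intro j hj
  have h1 := hgcoeffpos (k - j) (by omega)
  rw [hcoefftr j hj] at h1
  have hD := hdF j hj
  nlinarith [h1, hD]

/-- Main positivity lemma: on the Gårding cone, `σ_{k-1}` with one entry deleted is positive. -/
lemma lemQ : ∀ k, 1 ≤ k → ∀ {ι : Type} [DecidableEq ι] (lam : ι → ℝ) (A : Finset ι),
    k ≤ A.card → (∀ j, 1 ≤ j → j ≤ k → 0 < esymF lam j A) →
    ∀ i ∈ A, 0 < esymF lam (k-1) (A.erase i) := by
  intro k
  induction k using Nat.strong_induction_on with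
  | _ k IH =>
  intro hk1 ι _ lam A hkA hpos i hi
  rcases Nat.lt_or_ge k 2 with hk2 | hk2
  · have hkk : k = 1 := by omega
    subst hkk
    rw [esymF_zero]
    norm_num
  · set B := A.erase i with hB
    have hlow : ∀ m, m + 1 ≤ k - 1 → 0 < esymF lam m B := by
      intro m hm
      have := IH (m+1) (by omega) (by omega) lam A (by omega)
        (fun j hj1 hj2 => hpos j hj1 (by omega)) i hi
      simpa using this
    have hBpos : ∀ j, 1 ≤ j → j ≤ k - 1 → 0 < esymF lam (j-1) B := by
      intro j hj1 hj2
      have := hlow (j-1) (by omega)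
      simpa using this
    by_contra hneg
    push_neg at hneg
    obtain ⟨j₀, hj₀mem, hj₀min⟩ := Finset.exists_min_image (Finset.Icc 1 (k-1))
      (fun j => esymF lam j A / esymF lam (j-1) B) ⟨1, by rw [Finset.mem_Icc]; omega⟩
    rw [Finset.mem_Icc] at hj₀mem
    set t := esymF lam j₀ A / esymF lam (j₀ - 1) B with ht
    have htpos : 0 < t :=
      div_pos (hpos j₀ hj₀mem.1 (by omega)) (hBpos j₀ hj₀mem.1 hj₀mem.2)
    set nu := Function.update lam i (lam i - t) with hnu
    have hnuB : ∀ j, esymF nu j B = esymF lam j B := by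
      intro j
      refine esymF_congr j fun x hx => ?_
      rw [hnu, Function.update_of_ne (Finset.ne_of_mem_erase hx)]
    have hnui : nu i = lam i - t := by rw [hnu, Function.update_self]
    have hkey : ∀ j, 1 ≤ j → esymF nu j A = esymF lam j A - t * esymF lam (j-1) B := by
      intro j hj
      obtain ⟨j', rfl⟩ : ∃ j', j = j' + 1 := ⟨j - 1, by omega⟩
      rw [esymF_erase nu j' A hi, esymF_erase lam j' A hi, ← hB, hnuB, hnuB, hnui]
      simp only [Nat.add_sub_cancel]
      ring
    have hnu_nonneg : ∀ j, 1 ≤ j → j ≤ k → 0 ≤ esymF nu j A := by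
      intro j hj1 hjk
      rcases Nat.lt_or_ge j k with hjlt | hjge
      · rw [hkey j hj1]
        have hb := hBpos j hj1 (by omega)
        have hmin := hj₀min j (Finset.mem_Icc.mpr ⟨hj1, by omega⟩)
        have hle : t * esymF lam (j-1) B ≤ esymF lam j A := (le_div_iff₀ hb).mp hmin
        linarith
      · have hjk' : j = k := by omega
        subst hjk'
        rw [hkey j (by omega)]
        have hkB : esymF lam (j-1) B ≤ 0 := hneg
        nlinarith [hpos j (by omega) le_rfl]
    have hnu_k : 0 < esymF nu k A := by
      rw [hkey k (by omega)]
      have hkB : esymF lam (k-1) B ≤ 0 := hneg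
      nlinarith [hpos k (by omega) le_rfl]
    have hR := lemR nu A k hkA hnu_nonneg hnu_k j₀ (by omega)
    have hzero : esymF nu j₀ A = 0 := by
      rw [hkey j₀ hj₀mem.1, ht, div_mul_cancel₀ _ (ne_of_gt (hBpos j₀ hj₀mem.1 hj₀mem.2)),
        sub_self]
    rw [hzero] at hR
    exact lt_irrefl 0 hR

theorem stmt2 {n : ℕ} (k : ℕ) (hk : 1 ≤ k) (hkn : k ≤ n) (lam : Fin n → ℝ)
    (hG : lam ∈ GardingCone n k) (hsort : Antitone lam) :
    0 < esym1 (k - 1) lam ⟨0, by omega⟩ ∧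
      ∀ i j : Fin n, i ≤ j → esym1 (k - 1) lam i ≤ esym1 (k - 1) lam j := by
  have hesym : ∀ j : ℕ, esym j lam = esymF lam j (Finset.univ : Finset (Fin n)) := fun _ => rfl
  have hesym1 : ∀ (j : ℕ) (i : Fin n),
      esym1 j lam i = esymF lam j (Finset.univ.erase i) := fun _ _ => rfl
  have hcard : (Finset.univ : Finset (Fin n)).card = n := by simp
  have hpos : ∀ j, 1 ≤ j → j ≤ k → 0 < esymF lam j Finset.univ := by
    intro j h1 h2
    rw [← hesym]
    exact hG j h1 h2
  have hposE : ∀ (m : ℕ) (i : Fin n), 1 ≤ m + 1 → m + 1 ≤ k →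
      0 < esymF lam m (Finset.univ.erase i) := by
    intro m i _ h2
    have := lemQ (m+1) (by omega) lam Finset.univ (by omega)
      (fun j hj1 hj2 => hpos j hj1 (by omega)) i (Finset.mem_univ _)
    simpa using this
  constructor
  · rw [hesym1]
    have := lemQ k hk lam Finset.univ (by omega) hpos ⟨0, by omega⟩ (Finset.mem_univ _)
    exact this
  · intro i j hij
    rcases eq_or_lt_of_le hij with heq | hlt
    · rw [heq]
    · have hne : j ≠ i := ne_of_gt hlt
      have hne' : i ≠ j := ne_of_lt hlt
      rw [hesym1, hesym1]
      rcases Nat.lt_or_ge k 2 with hk2 | hk2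
      · have hkk : k = 1 := by omega
        subst hkk
        simp only [Nat.sub_self]
        rw [esymF_zero, esymF_zero]
      · have hji : j ∈ Finset.univ.erase i := Finset.mem_erase.mpr ⟨hne, Finset.mem_univ _⟩
        have hij2 : i ∈ Finset.univ.erase j := Finset.mem_erase.mpr ⟨hne', Finset.mem_univ _⟩
        have hsub : k - 2 + 1 = k - 1 := by omega
        have e1 := esymF_erase lam (k-2) (Finset.univ.erase i) hji
        have e2 := esymF_erase lam (k-2) (Finset.univ.erase j) hij2
        rw [hsub] at e1 e2
        have hcomm : (Finset.univ.erase j).erase i = (Finset.univ.erase i).erase j :=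
          Finset.erase_right_comm
        rw [hcomm] at e2
        have hD : 0 < esymF lam (k-2) ((Finset.univ.erase i).erase j) := by
          have hcard' : (Finset.univ.erase i).card = n - 1 := by
            rw [Finset.card_erase_of_mem (Finset.mem_univ _), hcard]
          have := lemQ (k-1) (by omega) lam (Finset.univ.erase i) (by omega)
            (fun m hm1 hm2 => hposE m i (by omega) (by omega)) j hji
          have hsub2 : k - 1 - 1 = k - 2 := by omega
          rwa [hsub2] at this
        have hmono : lam j ≤ lam i := hsort hij
        rw [e1, e2]
        nlinarith [hD, hmono]
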